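/- arXiv:math/0012266 — 3 statements merged into one kernel-verified Lean document; each statement's English description precedes it below -/
import Mathlib

section
/- Every connected simple graph Γ with the property that for every vertex v the subgraph induced on the neighbours of v is isomorphic to the complete tripartite graph K_{3,3,3} (three parts of size 3) is isomorphic to the complete multipartite graph K_{3,3,3,3} (four parts of size 3). -/
open SimpleGraph

namespace Stmt0Aux

variable {V : Type*} {G : SimpleGraph V}

section LocalLemmas

/-- Adjacency in the induced graph via the iso. -/
lemma adj_iff {s : Set V}
    (φ : (G.induce s) ≃g completeMultipartiteGraph (fun _ : Fin 3 => Fin 3))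
    (a b : s) : G.Adj a b ↔ (φ a).1 ≠ (φ b).1 := by
  have := φ.map_rel_iff (a := a) (b := b)
  simp only [comap_adj, top_adj, Function.Embedding.coe_subtype] at this
  rw [← this]

variable (hloc : ∀ v : V,
      Nonempty ((G.induce (G.neighborSet v)) ≃g
        completeMultipartiteGraph (fun _ : Fin 3 => Fin 3)))

include hloc

/-- Every vertex has a neighbour. -/
lemma nbr_nonempty (v : V) : ∃ u, G.Adj v u := by
  obtain ⟨φ⟩ := hloc v
  exact ⟨(φ.symm ⟨0, 0⟩ : G.neighborSet v), (φ.symm ⟨0, 0⟩).2⟩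

/-- Transfer adjacency within a link: if `a, b` are non-adjacent neighbours of `u`
(possibly equal) and `c` is a neighbour of `u` adjacent to `a`, then `c` is adjacent to `b`. -/
lemma loc_trans {u a b c : V} (ha : G.Adj u a) (hb : G.Adj u b) (hc : G.Adj u c)
    (hab : ¬ G.Adj a b) (hca : G.Adj c a) : G.Adj c b := by
  obtain ⟨φ⟩ := hloc u
  set a' : G.neighborSet u := ⟨a, ha⟩
  set b' : G.neighborSet u := ⟨b, hb⟩
  set c' : G.neighborSet u := ⟨c, hc⟩
  have h1 : (φ a').1 = (φ b').1 := by
    by_contra h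
    exact hab ((adj_iff φ a' b').2 h)
  have h2 : (φ c').1 ≠ (φ a').1 := (adj_iff φ c' a').1 hca
  exact (adj_iff φ c' b').2 (h1 ▸ h2)

/-- Two neighbours of `v` are equal, adjacent, or have a common neighbour inside `N(v)`. -/
lemma loc_path2 {v a b : V} (ha : G.Adj v a) (hb : G.Adj v b) :
    a = b ∨ G.Adj a b ∨ ∃ w, G.Adj v w ∧ G.Adj a w ∧ G.Adj b w := by
  obtain ⟨φ⟩ := hloc v
  set a' : G.neighborSet v := ⟨a, ha⟩
  set b' : G.neighborSet v := ⟨b, hb⟩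
  by_cases hadj : G.Adj a b
  · exact Or.inr (Or.inl hadj)
  have h1 : (φ a').1 = (φ b').1 := by
    by_contra h
    exact hadj ((adj_iff φ a' b').2 h)
  set w' := φ.symm ⟨(φ a').1 + 1, 0⟩
  have hfw : (φ w').1 = (φ a').1 + 1 := by simp [w']
  have hne : ∀ i : Fin 3, i + 1 ≠ i := by decide
  refine Or.inr (Or.inr ⟨w', w'.2, ?_, ?_⟩)
  · have : G.Adj (a' : V) (w' : V) := by
      refine (adj_iff φ a' w').2 ?_
      rw [hfw]; exact (hne _).symm
    exact this
  · have : G.Adj (b' : V) (w' : V) := by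
      refine (adj_iff φ b' w').2 ?_
      rw [hfw, ← h1]; exact (hne _).symm
    exact this

/-- The two "extra" vertices in the link of `u` corresponding to the part of `v`. -/
lemma loc_pair {u v : V} (huv : G.Adj u v) :
    ∃ x y, x ≠ y ∧ G.Adj u x ∧ G.Adj u y ∧ ¬ G.Adj v x ∧ ¬ G.Adj v y ∧
      x ≠ v ∧ y ≠ v ∧ ¬ G.Adj x y ∧
      (∀ w, G.Adj u w → ¬ G.Adj v w → w ≠ v → (w = x ∨ w = y)) := by
  obtain ⟨φ⟩ := hloc u
  set v' : G.neighborSet u := ⟨v, huv⟩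
  set p := φ v' with hp
  set x' := φ.symm ⟨p.1, p.2 + 1⟩ with hx'
  set y' := φ.symm ⟨p.1, p.2 + 2⟩ with hy'
  have hφx : φ x' = ⟨p.1, p.2 + 1⟩ := by simp [hx']
  have hφy : φ y' = ⟨p.1, p.2 + 2⟩ := by simp [hy']
  have fin3 : ∀ j : Fin 3, j + 1 ≠ j ∧ j + 2 ≠ j ∧ j + 1 ≠ j + 2 := by decide
  refine ⟨x', y', ?_, x'.2, y'.2, ?_, ?_, ?_, ?_, ?_, ?_⟩
  · intro h
    have : x' = y' := Subtype.ext h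
    rw [this] at hφx
    rw [hφx] at hφy
    have := congrArg Sigma.snd hφy
    exact (fin3 p.2).2.2 (by simpa using this.symm)
  · intro h
    have := (adj_iff φ v' x').1 h
    rw [hφx, ← hp] at this
    exact this rfl
  · intro h
    have := (adj_iff φ v' y').1 h
    rw [hφy, ← hp] at this
    exact this rfl
  · intro h
    have : x' = v' := Subtype.ext h
    rw [this, ← hp] at hφx
    have := congrArg Sigma.snd hφx
    exact (fin3 p.2).1 (by simpa using this.symm)
  · intro h
    have : y' = v' := Subtype.ext h
    rw [this, ← hp] at hφy
    have := congrArg Sigma.snd hφy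
    exact (fin3 p.2).2.1 (by simpa using this.symm)
  · intro h
    have := (adj_iff φ x' y').1 h
    rw [hφx, hφy] at this
    exact this rfl
  · intro w hw hnvw hwv
    set w' : G.neighborSet u := ⟨w, hw⟩
    have h1 : (φ w').1 = p.1 := by
      by_contra h
      exact hnvw ((adj_iff φ v' w').2 (by rw [← hp]; exact fun hq => h hq.symm))
    have h2 : (φ w').2 ≠ p.2 := by
      intro h
      apply hwv
      have : φ w' = φ v' := Sigma.ext h1 (heq_of_eq h)
      have := φ.injective this
      exact congrArg Subtype.val this
    have h3 : (φ w').2 = p.2 + 1 ∨ (φ w').2 = p.2 + 2 := by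
      revert h2
      have : ∀ a b : Fin 3, b ≠ a → b = a + 1 ∨ b = a + 2 := by decide
      exact this p.2 (φ w').2
    rcases h3 with h3 | h3
    · left
      have : w' = x' := by
        rw [hx']
        apply φ.injective
        simp
        exact Sigma.ext h1 (heq_of_eq h3)
      exact congrArg Subtype.val this
    · right
      have : w' = y' := by
        rw [hy']
        apply φ.injective
        simp
        exact Sigma.ext h1 (heq_of_eq h3)
      exact congrArg Subtype.val this

/-- If `x` is non-adjacent to `v`, distinct from it, and they have a common neighbour,
then `x` is adjacent to every neighbour of `v`. -/
lemma spread {v x u0 : V} (hu0 : G.Adj v u0) (hx0 : G.Adj x u0)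
    (hnvx : ¬ G.Adj v x) (hxv : x ≠ v) : ∀ u, G.Adj v u → G.Adj u x := by
  intro u hu
  by_cases h1 : u = u0
  · subst h1; exact hx0.symm
  by_cases h2 : G.Adj u0 u
  · exact loc_trans hloc (hu0.symm) (hx0.symm) h2 hnvx hu.symm
  · rcases loc_path2 hloc hu0 hu with h | h | ⟨w, hw, hw1, hw2⟩
    · exact absurd h.symm h1
    · exact absurd h h2
    · have hwx : G.Adj w x := loc_trans hloc hu0.symm hx0.symm hw1 hnvx hw.symm
      exact loc_trans hloc hw.symm hwx hw2.symm hnvx hu.symm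

end LocalLemmas

end Stmt0Aux

open Stmt0Aux in
/-- A connected simple graph which is locally the complete
tripartite graph `K_{3,3,3}` is isomorphic to the complete multipartite graph
`K_{3,3,3,3}`. -/
theorem stmt_0 {V : Type*} (G : SimpleGraph V) (hconn : G.Connected)
    (hloc : ∀ v : V,
      Nonempty ((G.induce (G.neighborSet v)) ≃g
        completeMultipartiteGraph (fun _ : Fin 3 => Fin 3))) :
    Nonempty (G ≃g completeMultipartiteGraph (fun _ : Fin 4 => Fin 3)) := by
  classical
  obtain ⟨v⟩ := hconn.nonempty
  obtain ⟨u0, hu0⟩ := nbr_nonempty hloc v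
  obtain ⟨x, y, hxy, hux, huy, hnvx, hnvy, hxv, hyv, hnxy, hcompl⟩ :=
    loc_pair hloc hu0.symm
  have hxall : ∀ u, G.Adj v u → G.Adj u x := spread hloc hu0 hux.symm hnvx hxv
  have hyall : ∀ u, G.Adj v u → G.Adj u y := spread hloc hu0 huy.symm hnvy hyv
  have hvallx : ∀ u, G.Adj x u → G.Adj u v :=
    spread hloc hux.symm hu0 (fun h => hnvx h.symm) (Ne.symm hxv)
  have hvally : ∀ u, G.Adj y u → G.Adj u v :=
    spread hloc huy.symm hu0 (fun h => hnvy h.symm) (Ne.symm hyv)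
  have hclosed : ∀ a b, (a = v ∨ a = x ∨ a = y ∨ G.Adj v a) → G.Adj a b →
      (b = v ∨ b = x ∨ b = y ∨ G.Adj v b) := by
    intro a b ha hab
    rcases ha with rfl | rfl | rfl | ha
    · exact Or.inr (Or.inr (Or.inr hab))
    · exact Or.inr (Or.inr (Or.inr (hvallx b hab).symm))
    · exact Or.inr (Or.inr (Or.inr (hvally b hab).symm))
    · by_cases h1 : b = v
      · exact Or.inl h1
      by_cases h2 : G.Adj v b
      · exact Or.inr (Or.inr (Or.inr h2))
      obtain ⟨x', y', hxy', hax', hay', hnx', hny', hx'v, hy'v, hnxy', hc'⟩ :=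
        loc_pair hloc ha.symm
      have hb' := hc' b hab h2 h1
      have hx' : x = x' ∨ x = y' := hc' x (hxall a ha) hnvx hxv
      have hy' : y = x' ∨ y = y' := hc' y (hyall a ha) hnvy hyv
      rcases hb' with rfl | rfl
      · rcases hx' with h | h
        · exact Or.inr (Or.inl h.symm)
        · rcases hy' with h' | h'
          · exact Or.inr (Or.inr (Or.inl h'.symm))
          · exact absurd (h.trans h'.symm) hxy
      · rcases hy' with h' | h'
        · rcases hx' with h | h
          · exact absurd (h.trans h'.symm).symm hxy.symm
          · exact Or.inr (Or.inl h.symm)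
        · exact Or.inr (Or.inr (Or.inl h'.symm))
  have hcover : ∀ w, w = v ∨ w = x ∨ w = y ∨ G.Adj v w := by
    have key : ∀ (a b : V) (p : G.Walk a b),
        (a = v ∨ a = x ∨ a = y ∨ G.Adj v a) → (b = v ∨ b = x ∨ b = y ∨ G.Adj v b) := by
      intro a b p
      induction p with
      | nil => exact id
      | cons h q ih => exact fun ha => ih (hclosed _ _ ha h)
    intro w
    exact key v w ((hconn v w).some) (Or.inl rfl)
  obtain ⟨φ⟩ := hloc v
  set g3 : Fin 3 → V := fun j => if j = 0 then v else if j = 1 then x else y with hg3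
  have hg3mem : ∀ j, g3 j = v ∨ g3 j = x ∨ g3 j = y := by
    intro j; simp only [hg3]; split_ifs <;> tauto
  have e0 : g3 0 = v := by simp [hg3]
  have e1 : g3 1 = x := by simp [hg3]
  have e2 : g3 2 = y := by simp [hg3]
  have hpair : ∀ j k : Fin 3, j ≠ k →
      (j=0∧k=1)∨(j=0∧k=2)∨(j=1∧k=0)∨(j=1∧k=2)∨(j=2∧k=0)∨(j=2∧k=1) := by decide
  have hg3inj : Function.Injective g3 := by
    intro j k h
    by_contra hne
    rcases hpair j k hne with ⟨rfl,rfl⟩|⟨rfl,rfl⟩|⟨rfl,rfl⟩|⟨rfl,rfl⟩|⟨rfl,rfl⟩|⟨rfl,rfl⟩ <;>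
      simp only [e0, e1, e2] at h <;>
      first
        | exact hxv h.symm
        | exact hyv h.symm
        | exact hxv h
        | exact hyv h
        | exact hxy h
        | exact hxy h.symm
  set f : (Σ _ : Fin 4, Fin 3) → V := fun s =>
    if h : (s.1 : ℕ) < 3 then ((φ.symm ⟨⟨(s.1 : ℕ), h⟩, s.2⟩ : G.neighborSet v) : V)
    else g3 s.2 with hf
  have hmem : ∀ (s : Σ _ : Fin 4, Fin 3) (h : ((s.1 : ℕ) < 3)),
      f s = ((φ.symm ⟨⟨(s.1 : ℕ), h⟩, s.2⟩ : G.neighborSet v) : V) := by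
    intro s h; simp only [hf, dif_pos h]
  have hmem' : ∀ (s : Σ _ : Fin 4, Fin 3), ¬((s.1 : ℕ) < 3) → f s = g3 s.2 := by
    intro s h; simp only [hf, dif_neg h]
  have hadjf : ∀ (s : Σ _ : Fin 4, Fin 3) (h : ((s.1 : ℕ) < 3)), G.Adj v (f s) := by
    intro s h; rw [hmem s h]
    exact (φ.symm ⟨⟨(s.1 : ℕ), h⟩, s.2⟩).2
  have hnadj3 : ∀ a b, (a = v ∨ a = x ∨ a = y) → (b = v ∨ b = x ∨ b = y) → ¬G.Adj a b := by
    rintro a b (rfl | rfl | rfl) (rfl | rfl | rfl) h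
    · exact G.loopless.irrefl _ h
    · exact hnvx h
    · exact hnvy h
    · exact hnvx h.symm
    · exact G.loopless.irrefl _ h
    · exact hnxy h
    · exact hnvy h.symm
    · exact hnxy h.symm
    · exact G.loopless.irrefl _ h
  have hnadjv3 : ∀ b, (b = v ∨ b = x ∨ b = y) → ¬G.Adj v b := fun b hb =>
    hnadj3 v b (Or.inl rfl) hb
  have hinj : Function.Injective f := by
    intro s t hst
    by_cases hs : ((s.1 : ℕ) < 3) <;> by_cases ht : ((t.1 : ℕ) < 3)
    · rw [hmem s hs, hmem t ht] at hst
      have h2 := φ.symm.injective (Subtype.coe_injective hst)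
      have h3 : (⟨(s.1 : ℕ), hs⟩ : Fin 3) = ⟨(t.1 : ℕ), ht⟩ ∧ HEq s.2 t.2 := by
        exact Sigma.mk.inj_iff.mp h2
      have h4 := congrArg Fin.val h3.1
      exact Sigma.ext (Fin.ext h4) h3.2
    · exact absurd (hst ▸ hadjf s hs) (hnadjv3 _ (hmem' t ht ▸ hg3mem t.2))
    · exact absurd (hst ▸ hadjf t ht) (hnadjv3 _ (hmem' s hs ▸ hg3mem s.2))
    · have h1 : s.1 = t.1 := by
        apply Fin.ext; omega
      have h2 : s.2 = t.2 := by
        apply hg3inj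
        rw [← hmem' s hs, ← hmem' t ht, hst]
      exact Sigma.ext h1 (heq_of_eq h2)
  have hsurj : Function.Surjective f := by
    intro w
    rcases hcover w with rfl | rfl | rfl | hw
    · refine ⟨⟨3, 0⟩, ?_⟩
      rw [hmem' ⟨3, 0⟩ (by decide)]
      rw [e0]
    · refine ⟨⟨3, 1⟩, ?_⟩
      rw [hmem' ⟨3, 1⟩ (by decide)]
      rw [e1]
    · refine ⟨⟨3, 2⟩, ?_⟩
      rw [hmem' ⟨3, 2⟩ (by decide)]
      rw [e2]
    · set w' : G.neighborSet v := ⟨w, hw⟩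
      refine ⟨⟨⟨((φ w').1 : ℕ), by omega⟩, (φ w').2⟩, ?_⟩
      rw [hmem _ (by simpa using (φ w').1.isLt)]
      have : (⟨⟨((φ w').1 : ℕ), by simp⟩, (φ w').2⟩ : Σ _ : Fin 3, Fin 3) = φ w' := by
        exact Sigma.ext (Fin.ext rfl) (heq_of_eq rfl)
      rw [this, φ.symm_apply_apply]
  have hadj : ∀ s t, G.Adj (f s) (f t) ↔ s.1 ≠ t.1 := by
    intro s t
    by_cases hs : ((s.1 : ℕ) < 3) <;> by_cases ht : ((t.1 : ℕ) < 3)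
    · rw [hmem s hs, hmem t ht]
      rw [adj_iff φ]
      simp only [φ.apply_symm_apply]
      constructor
      · intro h h'
        apply h
        apply Fin.ext
        show ((s.1 : ℕ)) = ((t.1 : ℕ))
        exact congrArg Fin.val h'
      · intro h h'
        apply h
        apply Fin.ext
        have h4 := congrArg Fin.val h'
        exact h4
    · refine iff_of_true ?_ ?_
      · have h1 := hadjf s hs
        rcases hmem' t ht ▸ hg3mem t.2 with h | h | h <;> rw [h]
        · exact h1.symm
        · exact hxall (f s) h1
        · exact hyall (f s) h1
      · intro h
        rw [h] at hs
        exact ht hs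
    · refine iff_of_true ?_ ?_
      · have h1 := hadjf t ht
        rcases hmem' s hs ▸ hg3mem s.2 with h | h | h <;> rw [h]
        · exact h1
        · exact (hxall (f t) h1).symm
        · exact (hyall (f t) h1).symm
      · intro h
        rw [h] at hs
        exact hs ht
    · refine iff_of_false ?_ ?_
      · exact hnadj3 _ _ (hmem' s hs ▸ hg3mem s.2) (hmem' t ht ▸ hg3mem t.2)
      · intro h
        apply h
        apply Fin.ext
        have h1 := s.1.isLt
        have h2 := t.1.isLt
        omega
  refine ⟨RelIso.symm ⟨Equiv.ofBijective f ⟨hinj, hsurj⟩, ?_⟩⟩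
  intro a b
  simp only [Equiv.ofBijective_apply, comap_adj, top_adj]
  exact hadj a b
end

section
/- Let V = Fin 7 → ZMod 2, let q : V → ZMod 2 be the quadratic form q(x) = x₀x₁ + x₂x₃ + x₄x₅ + x₆, and let e₆ denote the last standard basis vector. Consider the simple graph Γ on the 128 vectors of V in which distinct x, y are adjacent if and only if q(x+y) = 0. Then: (i) every vertex has exactly 63 neighbours; (ii) any two adjacent vertices have exactly 30 common neighbours; (iii) for every x, the vertices x and x + e₆ are non-adjacent and have no common neighbour; (iv) any two distinct non-adjacent vertices x, y with y ≠ x + e₆ have exactly 32 common neighbours. In particular Γ is a 2-fold antipodal cover of the complete graph on 64 vertices, with x + e₆ the unique vertex at distance 3 from x. -/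
set_option maxRecDepth 40000

/-- The quadratic form `q(x) = x₀x₁ + x₂x₃ + x₄x₅ + x₆` on `GF(2)^7`. -/
def q7 (x : Fin 7 → ZMod 2) : ZMod 2 :=
  x 0 * x 1 + x 2 * x 3 + x 4 * x 5 + x 6

/-- The last standard basis vector `e₆` of `GF(2)^7`. -/
def e6 : Fin 7 → ZMod 2 := Pi.single 6 1

/-- The graph on the 128 vectors of `GF(2)^7` in which distinct `x`, `y` are
adjacent iff `q(x+y) = 0`. -/
def coverGraph : SimpleGraph (Fin 7 → ZMod 2) where
  Adj x y := x ≠ y ∧ q7 (x + y) = 0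
  symm := by
    constructor
    rintro x y ⟨h1, h2⟩
    exact ⟨h1.symm, by rwa [add_comm]⟩
  loopless := by constructor; rintro x ⟨h, -⟩; exact h rfl

instance : DecidableRel coverGraph.Adj :=
  fun x y => inferInstanceAs (Decidable (x ≠ y ∧ q7 (x + y) = 0))

namespace CoverAux

abbrev V := Fin 7 → ZMod 2

lemma vv (v : V) : v + v = 0 := by
  funext i; exact CharTwo.add_self_eq_zero (v i)

lemma shift_add (v x y : V) : (x + v) + (y + v) = x + y := by
  have h := vv v
  calc (x + v) + (y + v) = (x + y) + (v + v) := by ring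
  _ = x + y := by rw [h, add_zero]

lemma add_eq_zero_iff' (x y : V) : x + y = 0 ↔ x = y := by
  constructor
  · intro h
    have := congrArg (· + y) h
    simpa [add_assoc, vv] using this
  · rintro rfl; exact vv x

lemma shift_adj (v x y : V) :
    coverGraph.Adj (x + v) (y + v) ↔ coverGraph.Adj x y := by
  show ((x + v) ≠ (y + v) ∧ _) ↔ (x ≠ y ∧ _)
  rw [shift_add]
  simp

lemma adj_zero_iff (x y : V) : coverGraph.Adj x y ↔ coverGraph.Adj 0 (x + y) := by
  have := (shift_adj x x y).symm
  rwa [vv, add_comm y x] at this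

/-- Shifting as a graph homomorphism. -/
def shiftHom (v : V) : coverGraph →g coverGraph where
  toFun := (· + v)
  map_rel' := fun h => (shift_adj v _ _).mpr h

lemma dist_shift_le (v x y : V) :
    coverGraph.dist (x + v) (y + v) ≤ coverGraph.dist x y := by
  by_cases h : coverGraph.Reachable x y
  · obtain ⟨p, hp⟩ := h.exists_walk_length_eq_dist
    have := coverGraph.dist_le (p.map (shiftHom v))
    rwa [SimpleGraph.Walk.length_map, hp] at this
  · rw [SimpleGraph.dist_eq_zero_of_not_reachable h]
    rw [SimpleGraph.dist_eq_zero_of_not_reachable]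
    intro hr
    exact h <| by
      obtain ⟨p⟩ := hr
      have q2 : coverGraph.Walk (x + v + v) (y + v + v) := p.map (shiftHom v)
      rw [add_assoc, vv, add_zero, add_assoc, vv, add_zero] at q2
      exact ⟨q2⟩

lemma dist_shift (v x y : V) :
    coverGraph.dist (x + v) (y + v) = coverGraph.dist x y := by
  refine le_antisymm (dist_shift_le v x y) ?_
  have := dist_shift_le v (x + v) (y + v)
  rwa [add_assoc, vv, add_zero, add_assoc, vv, add_zero] at this

lemma mem_common_shift (x y z : V) :
    z ∈ coverGraph.commonNeighbors x y ↔
      (z + x) ∈ coverGraph.commonNeighbors 0 (x + y) := by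
  rw [SimpleGraph.mem_commonNeighbors, SimpleGraph.mem_commonNeighbors]
  constructor
  · rintro ⟨h1, h2⟩
    refine ⟨?_, ?_⟩
    · have := (shift_adj x x z).mpr h1; rwa [vv] at this
    · have := (shift_adj x y z).mpr h2; rwa [add_comm y x] at this
  · rintro ⟨h1, h2⟩
    refine ⟨?_, ?_⟩
    · have := (shift_adj x x z).mp (by rwa [vv]); exact this
    · exact (shift_adj x y z).mp (by rwa [add_comm x y] at h2)

lemma card_common_shift (x y : V) :
    Fintype.card (coverGraph.commonNeighbors x y) =
      Fintype.card (coverGraph.commonNeighbors 0 (x + y)) := by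
  exact Fintype.card_congr
    (Equiv.subtypeEquiv (Equiv.addRight x) (fun z => mem_common_shift x y z))

-- base-point computations
lemma deg0 : coverGraph.degree 0 = 63 := by decide

lemma lam0 : ∀ d : V, d ≠ 0 → q7 d = 0 →
    Fintype.card (coverGraph.commonNeighbors 0 d) = 30 := by decide

lemma mu0 : ∀ d : V, d ≠ 0 → q7 d ≠ 0 → d ≠ e6 →
    Fintype.card (coverGraph.commonNeighbors 0 d) = 32 := by decide

lemma nocommon0 : ∀ z, z ∉ coverGraph.commonNeighbors 0 e6 := by decide

lemma degree_eq (x : V) : coverGraph.degree x = coverGraph.degree 0 := by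
  unfold SimpleGraph.degree
  refine Finset.card_bij' (fun z _ => z + x) (fun z _ => z + x) ?_ ?_ ?_ ?_
  · intro z hz
    show z + x ∈ coverGraph.neighborFinset 0
    rw [SimpleGraph.mem_neighborFinset] at hz ⊢
    rw [add_comm z x]
    exact (adj_zero_iff x z).mp hz
  · intro z hz
    show z + x ∈ coverGraph.neighborFinset x
    rw [SimpleGraph.mem_neighborFinset] at hz ⊢
    rw [adj_zero_iff x (z + x), add_comm z x, ← add_assoc, vv, zero_add]
    exact hz
  · intro z _; show z + x + x = z; rw [add_assoc, vv, add_zero]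
  · intro z _; show z + x + x = z; rw [add_assoc, vv, add_zero]

-- the length-3 walk from 0 to e6
def a3 : V := ![1,0,0,0,0,0,0]
def b3 : V := ![0,1,0,0,0,0,1]

lemma adj1 : coverGraph.Adj 0 a3 := by decide
lemma adj2 : coverGraph.Adj a3 b3 := by decide
lemma adj3 : coverGraph.Adj b3 e6 := by decide
lemma zero_ne_e6 : (0 : V) ≠ e6 := by decide
lemma not_adj_0_e6 : ¬ coverGraph.Adj 0 e6 := by decide

lemma dist_le_two_of_common {x y : V}
    (h : (coverGraph.commonNeighbors x y).Nonempty) :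
    coverGraph.dist x y ≤ 2 := by
  obtain ⟨z, hz⟩ := h
  rw [SimpleGraph.mem_commonNeighbors] at hz
  have := coverGraph.dist_le
    (SimpleGraph.Walk.cons hz.1 (SimpleGraph.Walk.cons hz.2.symm SimpleGraph.Walk.nil))
  simpa using this

lemma dist_0_e6 : coverGraph.dist 0 e6 = 3 := by
  let w3 : coverGraph.Walk 0 e6 :=
    .cons adj1 (.cons adj2 (.cons adj3 .nil))
  have hle : coverGraph.dist 0 e6 ≤ 3 := by
    have := coverGraph.dist_le w3
    simpa [w3] using this
  have hreach : coverGraph.Reachable 0 e6 := ⟨w3⟩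
  have hne0 : coverGraph.dist 0 e6 ≠ 0 :=
    SimpleGraph.dist_ne_zero_iff_ne_and_reachable.mpr ⟨zero_ne_e6, hreach⟩
  have hne1 : coverGraph.dist 0 e6 ≠ 1 := by
    intro h
    exact not_adj_0_e6 (SimpleGraph.dist_eq_one_iff_adj.mp h)
  have hne2 : coverGraph.dist 0 e6 ≠ 2 := by
    intro h
    obtain ⟨p, hp⟩ := hreach.exists_walk_length_eq_dist
    rw [h] at hp
    have h01 : coverGraph.Adj (p.getVert 0) (p.getVert 1) :=
      p.adj_getVert_succ (by omega)
    have h12 : coverGraph.Adj (p.getVert 1) (p.getVert 2) :=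
      p.adj_getVert_succ (by omega)
    rw [p.getVert_zero] at h01
    have h2 : p.getVert 2 = e6 := by
      have := p.getVert_length
      rwa [hp] at this
    rw [h2] at h12
    exact nocommon0 (p.getVert 1)
      ((SimpleGraph.mem_commonNeighbors coverGraph).mpr ⟨h01, h12.symm⟩)
  omega

end CoverAux

open CoverAux in
/-- In the graph on `GF(2)^7` with distinct `x`, `y` adjacent
iff `q(x+y) = 0`: (i) every vertex has exactly 63 neighbours; (ii) adjacent
vertices have exactly 30 common neighbours; (iii) `x` and `x + e₆` are
non-adjacent with no common neighbour; (iv) distinct non-adjacent vertices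
`x`, `y` with `y ≠ x + e₆` have exactly 32 common neighbours; and `x + e₆` is
the unique vertex at distance 3 from `x`. -/
theorem stmt_6 :
    (∀ x, coverGraph.degree x = 63) ∧
    (∀ x y, coverGraph.Adj x y →
      Fintype.card (coverGraph.commonNeighbors x y) = 30) ∧
    (∀ x, ¬ coverGraph.Adj x (x + e6) ∧
      coverGraph.commonNeighbors x (x + e6) = ∅) ∧
    (∀ x y, x ≠ y → ¬ coverGraph.Adj x y → y ≠ x + e6 →
      Fintype.card (coverGraph.commonNeighbors x y) = 32) ∧
    (∀ x y, coverGraph.dist x y = 3 ↔ y = x + e6) := by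
  have key_mu : ∀ x y : V, x ≠ y → ¬ coverGraph.Adj x y → y ≠ x + e6 →
      Fintype.card (coverGraph.commonNeighbors x y) = 32 := by
    intro x y hne hnadj hne6
    rw [card_common_shift]
    refine mu0 _ ?_ ?_ ?_
    · intro h; exact hne ((add_eq_zero_iff' x y).mp h)
    · intro hq
      exact hnadj ⟨hne, hq⟩
    · intro h
      apply hne6
      have := congrArg (x + ·) h
      simpa [← add_assoc, vv] using this
  refine ⟨?_, ?_, ?_, key_mu, ?_⟩
  · intro x; rw [degree_eq x]; exact deg0
  · intro x y hadj
    rw [card_common_shift]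
    refine lam0 _ ?_ hadj.2
    intro h; exact hadj.1 ((add_eq_zero_iff' x y).mp h)
  · intro x
    constructor
    · intro h
      have := (adj_zero_iff x (x + e6)).mp h
      rw [← add_assoc, vv, zero_add] at this
      exact not_adj_0_e6 this
    · rw [Set.eq_empty_iff_forall_notMem]
      intro z hz
      rw [mem_common_shift] at hz
      rw [← add_assoc, vv, zero_add] at hz
      exact nocommon0 _ hz
  · intro x y
    constructor
    · intro h
      by_contra hne6
      rcases eq_or_ne x y with rfl | hne
      · rw [SimpleGraph.dist_self] at h; omega
      by_cases hadj : coverGraph.Adj x y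
      · rw [SimpleGraph.dist_eq_one_iff_adj.mpr hadj] at h; omega
      · have hcard := key_mu x y hne hadj hne6
        have hpos : 0 < Fintype.card (coverGraph.commonNeighbors x y) := by omega
        have hnon : (coverGraph.commonNeighbors x y).Nonempty := by
          obtain ⟨⟨z, hz⟩⟩ := Fintype.card_pos_iff.mp hpos
          exact ⟨z, hz⟩
        have := dist_le_two_of_common hnon
        omega
    · rintro rfl
      have := dist_shift x 0 e6
      rw [zero_add, add_comm e6 x, dist_0_e6] at this
      exact this
end

section
/- Let V = Fin 8 → ZMod 2 and let Q : V → ZMod 2 be any quadratic form (Q(0) = 0 and Q(x+y) = Q(x) + Q(y) + B(x,y) for a bilinear B) whose polar form B is nondegenerate. Then the simple graph whose vertices are the nonsingular vectors {v : Q(v) = 1}, with distinct u, v adjacent if and only if B(u,v) = 0, is locally the Sp_6(2) polar graph: for every vertex u the subgraph induced on the neighbours of u is isomorphic to the graph whose vertices are the nonzero vectors of Fin 6 → ZMod 2 with the standard nondegenerate alternating form B'(x,y) = Σ_{i=0}^{2}(x_{2i}·y_{2i+1} + x_{2i+1}·y_{2i}), two distinct vectors being adjacent if and only if B' vanishes on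 them. -/
/-- The polar form `B(x,y) = Q(x+y) + Q(x) + Q(y)` of a quadratic form `Q`. -/
def polarForm (Q : (Fin 8 → ZMod 2) → ZMod 2) (x y : Fin 8 → ZMod 2) : ZMod 2 :=
  Q (x + y) + Q x + Q y

lemma polarForm_comm (Q : (Fin 8 → ZMod 2) → ZMod 2) (x y : Fin 8 → ZMod 2) :
    polarForm Q x y = polarForm Q y x := by
  unfold polarForm; rw [add_comm x y]; ring

/-- The graph on the nonsingular vectors of a quadratic form `Q` on `GF(2)^8`:
distinct `u`, `v` with `Q(u) = Q(v) = 1` are adjacent iff `B(u,v) = 0`, where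
`B` is the polar form of `Q`. -/
def nonsingularGraph (Q : (Fin 8 → ZMod 2) → ZMod 2) :
    SimpleGraph {v : Fin 8 → ZMod 2 // Q v = 1} where
  Adj u v := u ≠ v ∧ polarForm Q u.1 v.1 = 0
  symm := by
    constructor
    rintro u v ⟨h1, h2⟩
    exact ⟨h1.symm, by rw [polarForm_comm]; exact h2⟩
  loopless := by constructor; rintro u ⟨h, -⟩; exact h rfl

/-- The standard nondegenerate alternating bilinear form
`B'(x,y) = Σ_{i=0}^{2} (x_{2i}·y_{2i+1} + x_{2i+1}·y_{2i})` on `GF(2)^6`. -/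
def sp6Form (x y : Fin 6 → ZMod 2) : ZMod 2 :=
  ∑ i : Fin 3,
    (x ⟨2 * i.1, by have := i.2; omega⟩ * y ⟨2 * i.1 + 1, by have := i.2; omega⟩ +
     x ⟨2 * i.1 + 1, by have := i.2; omega⟩ * y ⟨2 * i.1, by have := i.2; omega⟩)

lemma sp6Form_comm (x y : Fin 6 → ZMod 2) : sp6Form x y = sp6Form y x :=
  Finset.sum_congr rfl fun i _ => by ring

/-- The `Sp_6(2)` polar graph: nonzero vectors of `GF(2)^6`, distinct `u`, `v`
adjacent iff `B'(u,v) = 0`. -/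
def sp6PolarGraph : SimpleGraph {v : Fin 6 → ZMod 2 // v ≠ 0} where
  Adj u v := u ≠ v ∧ sp6Form u.1 v.1 = 0
  symm := by
    constructor
    rintro u v ⟨h1, h2⟩
    exact ⟨h1.symm, by rw [sp6Form_comm]; exact h2⟩
  loopless := by constructor; rintro u ⟨h, -⟩; exact h rfl


abbrev V8 := Fin 8 → ZMod 2

lemma zmod2_ne0 : ∀ a : ZMod 2, a ≠ 0 ↔ a = 1 := by decide
lemma zmod2_add_self : ∀ a : ZMod 2, a + a = 0 := by decide
lemma v8_add_self (x : V8) : x + x = 0 := by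
  funext i; exact zmod2_add_self (x i)

lemma sp6_expand (c d : Fin 6 → ZMod 2) : sp6Form c d =
    c 0 * d 1 + c 1 * d 0 + c 2 * d 3 + c 3 * d 2 + c 4 * d 5 + c 5 * d 4 := by
  simp [sp6Form, Fin.sum_univ_three]
  ring_nf

def gram : Fin 6 → Fin 6 → ZMod 2 := fun i j =>
  if (i.1 = 0 ∧ j.1 = 1) ∨ (i.1 = 1 ∧ j.1 = 0) ∨ (i.1 = 2 ∧ j.1 = 3) ∨
     (i.1 = 3 ∧ j.1 = 2) ∨ (i.1 = 4 ∧ j.1 = 5) ∨ (i.1 = 5 ∧ j.1 = 4) then 1 else 0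

lemma gram_nondeg : ∀ d : Fin 6 → ZMod 2, (∀ j, ∑ i, d i * gram i j = 0) → d = 0 := by
  decide

lemma gram_sp6 (c d : Fin 6 → ZMod 2) :
    (∑ i, c i * ∑ j, d j * gram j i) = sp6Form c d := by
  rw [sp6_expand]
  have h3 : ((3:Fin 6):ℕ) = 3 := rfl
  have h4 : ((4:Fin 6):ℕ) = 4 := rfl
  have h5 : ((5:Fin 6):ℕ) = 5 := rfl
  simp [Fin.sum_univ_six, gram, h3, h4, h5]

def six {α : Type} (a b c d e f : α) : Fin 6 → α
  | ⟨0,_⟩ => a | ⟨1,_⟩ => b | ⟨2,_⟩ => c | ⟨3,_⟩ => d | ⟨4,_⟩ => e | ⟨5,_⟩ => f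

lemma gram_of_facts (Q : (Fin 8 → ZMod 2) → ZMod 2) (e1 f1 e2 f2 e3 f3 : V8)
    (pfs : ∀ x : V8, polarForm Q x x = 0)
    (h12 : polarForm Q e1 f1 = 1) (h34 : polarForm Q e2 f2 = 1) (h56 : polarForm Q e3 f3 = 1)
    (h13 : polarForm Q e1 e2 = 0) (h14 : polarForm Q e1 f2 = 0)
    (h23 : polarForm Q f1 e2 = 0) (h24 : polarForm Q f1 f2 = 0)
    (h15 : polarForm Q e1 e3 = 0) (h16 : polarForm Q e1 f3 = 0)
    (h25 : polarForm Q f1 e3 = 0) (h26 : polarForm Q f1 f3 = 0)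
    (h35 : polarForm Q e2 e3 = 0) (h36 : polarForm Q e2 f3 = 0)
    (h45 : polarForm Q f2 e3 = 0) (h46 : polarForm Q f2 f3 = 0) :
    ∀ i j, polarForm Q (six e1 f1 e2 f2 e3 f3 i) (six e1 f1 e2 f2 e3 f3 j) = gram i j := by
  intro i j
  fin_cases i <;> fin_cases j <;> simp only [six, gram, Fin.mk_zero, Fin.mk_one] <;> norm_num
  all_goals try assumption
  all_goals try (rw [polarForm_comm Q]; assumption)
  all_goals exact pfs _

section
set_option linter.unusedSectionVars false
variable (Q : (Fin 8 → ZMod 2) → ZMod 2)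
variable (hQ0 : Q 0 = 0)
variable (hbil : ∀ x y z : V8, polarForm Q (x + y) z = polarForm Q x z + polarForm Q y z)

include hQ0 hbil

lemma pf_zero_left (y : V8) : polarForm Q 0 y = 0 := by
  unfold polarForm; rw [zero_add, hQ0]; rw [add_zero]; exact zmod2_add_self _

lemma pf_self (x : V8) : polarForm Q x x = 0 := by
  unfold polarForm; rw [v8_add_self, hQ0, zero_add]; exact zmod2_add_self _

lemma pf_zero_right (x : V8) : polarForm Q x 0 = 0 := by
  rw [polarForm_comm]; exact pf_zero_left Q hQ0 hbil x

lemma pf_add_right (x y z : V8) :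
    polarForm Q x (y + z) = polarForm Q x y + polarForm Q x z := by
  rw [polarForm_comm, hbil, polarForm_comm Q y, polarForm_comm Q z]

lemma pf_smul_left (a : ZMod 2) (x y : V8) :
    polarForm Q (a • x) y = a * polarForm Q x y := by
  have : ∀ b : ZMod 2, b = 0 ∨ b = 1 := by decide
  have := this a
  rcases this with h | h <;> subst h
  · rw [zero_smul, pf_zero_left Q hQ0 hbil, zero_mul]
  · rw [one_smul, one_mul]

lemma pf_smul_right (a : ZMod 2) (x y : V8) :
    polarForm Q x (a • y) = a * polarForm Q x y := by
  rw [polarForm_comm, pf_smul_left Q hQ0 hbil, polarForm_comm]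

lemma pf_sum_left {n : ℕ} (c : Fin n → ZMod 2) (w : Fin n → V8) (y : V8) :
    polarForm Q (∑ i, c i • w i) y = ∑ i, c i * polarForm Q (w i) y := by
  let F : V8 →+ ZMod 2 := AddMonoidHom.mk' (fun x => polarForm Q x y) (fun a b => hbil a b y)
  have : polarForm Q (∑ i, c i • w i) y = F (∑ i, c i • w i) := rfl
  rw [this, map_sum]
  exact Finset.sum_congr rfl fun i _ => pf_smul_left Q hQ0 hbil _ _ _


/-- halving lemma -/
lemma halve (S : Finset V8) (v y : V8) (hy : y ∈ S) (hvy : polarForm Q v y = 1)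
    (hcl : ∀ x ∈ S, x + y ∈ S) :
    (S.filter (fun x => polarForm Q v x = 0)).card * 2 = S.card := by
  have key : (S.filter (fun x => polarForm Q v x = 0)).card
      = (S.filter (fun a => ¬ polarForm Q v a = 0)).card := by
    apply Finset.card_bij' (fun x _ => x + y) (fun x _ => x + y)
    · intro a ha
      simp only [Finset.mem_filter] at ha ⊢
      refine ⟨hcl a ha.1, ?_⟩
      rw [pf_add_right Q hQ0 hbil, ha.2, zero_add, hvy]
      decide
    · intro a ha
      simp only [Finset.mem_filter] at ha ⊢
      refine ⟨hcl a ha.1, ?_⟩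
      rw [pf_add_right Q hQ0 hbil, hvy]
      have := (zmod2_ne0 _).mp ha.2
      rw [this]; decide
    · intro a _; rw [add_assoc, v8_add_self, add_zero]
    · intro a _; rw [add_assoc, v8_add_self, add_zero]
  have h2 := Finset.card_filter_add_card_filter_not
    (s := S) (p := fun x => polarForm Q v x = 0)
  rw [mul_two]
  nth_rewrite 2 [key]
  exact h2

/-- key perpendicularity witness -/
lemma exists_y (hnondeg : ∀ x : V8, (∀ y : V8, polarForm Q x y = 0) → x = 0)
    (u e : V8) (he0 : e ≠ 0) (heu : e ≠ u) :
    ∃ y, polarForm Q e y = 1 ∧ polarForm Q u y = 0 := by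
  by_contra hcon
  push_neg at hcon
  -- get y₁ with B e y₁ = 1
  have he1 : ∃ y, polarForm Q e y = 1 := by
    by_contra h
    push_neg at h
    apply he0
    apply hnondeg
    intro y
    have := h y
    have h2 : ∀ b : ZMod 2, b ≠ 1 → b = 0 := by decide
    exact h2 _ this
  obtain ⟨y₁, hy₁⟩ := he1
  have huy₁ : polarForm Q u y₁ = 1 := by
    have := hcon y₁ hy₁
    exact (zmod2_ne0 _).mp this
  -- show e + u is in the radical
  have : e + u = 0 := by
    apply hnondeg
    intro z
    rw [hbil]
    have hz : ∀ b : ZMod 2, b = 0 ∨ b = 1 := by decide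
    rcases hz (polarForm Q e z) with h | h
    · -- B e z = 0 ⟹ B u z = 0
      have h1 : polarForm Q e (z + y₁) = 1 := by
        rw [pf_add_right Q hQ0 hbil, h, zero_add, hy₁]
      have h2 := hcon _ h1
      rw [pf_add_right Q hQ0 hbil, huy₁] at h2
      have h3 : polarForm Q u z = 0 := by
        have : ∀ b : ZMod 2, b + 1 ≠ 0 → b = 0 := by decide
        exact this _ h2
      rw [h, h3, add_zero]
    · have h2 := hcon z h
      have := (zmod2_ne0 _).mp h2
      rw [h, this]; decide
  apply heu
  have : e + u + u = u := by rw [this, zero_add]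
  rwa [add_assoc, v8_add_self, add_zero] at this


variable (hnondeg : ∀ x : V8, (∀ y : V8, polarForm Q x y = 0) → x = 0)
include hnondeg

lemma exists_partner1 (u e a b : V8)
    (hab : polarForm Q a b = 1) (hua : polarForm Q u a = 0) (hub : polarForm Q u b = 0)
    (hea : polarForm Q e a = 0) (heb : polarForm Q e b = 0)
    (he0 : e ≠ 0) (heu : e ≠ u) :
    ∃ f, polarForm Q e f = 1 ∧ polarForm Q u f = 0 ∧
      polarForm Q a f = 0 ∧ polarForm Q b f = 0 := by
  obtain ⟨y, hy1, hy2⟩ := exists_y Q hQ0 hbil hnondeg u e he0 heu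
  refine ⟨y + ((polarForm Q a y) • b + (polarForm Q b y) • a), ?_, ?_, ?_, ?_⟩ <;>
    simp only [pf_add_right Q hQ0 hbil, pf_smul_right Q hQ0 hbil]
  · rw [hy1, heb, hea, mul_zero, mul_zero, add_zero, add_zero]
  · rw [hy2, hub, hua, mul_zero, mul_zero, add_zero, add_zero]
  · rw [hab, pf_self Q hQ0 hbil, mul_one, mul_zero, add_zero]
    exact zmod2_add_self _
  · rw [pf_self Q hQ0 hbil, polarForm_comm Q b a, hab, mul_zero, mul_one, zero_add]
    exact zmod2_add_self _

lemma exists_partner2 (u e a b a' b' : V8)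
    (hab : polarForm Q a b = 1) (hua : polarForm Q u a = 0) (hub : polarForm Q u b = 0)
    (hab' : polarForm Q a' b' = 1) (hua' : polarForm Q u a' = 0) (hub' : polarForm Q u b' = 0)
    (haa' : polarForm Q a a' = 0) (hab2 : polarForm Q a b' = 0)
    (hba' : polarForm Q b a' = 0) (hbb' : polarForm Q b b' = 0)
    (hea : polarForm Q e a = 0) (heb : polarForm Q e b = 0)
    (hea' : polarForm Q e a' = 0) (heb' : polarForm Q e b' = 0)
    (he0 : e ≠ 0) (heu : e ≠ u) :
    ∃ f, polarForm Q e f = 1 ∧ polarForm Q u f = 0 ∧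
      polarForm Q a f = 0 ∧ polarForm Q b f = 0 ∧
      polarForm Q a' f = 0 ∧ polarForm Q b' f = 0 := by
  obtain ⟨y, hy1, hy2⟩ := exists_y Q hQ0 hbil hnondeg u e he0 heu
  refine ⟨y + ((polarForm Q a y) • b + (polarForm Q b y) • a)
      + ((polarForm Q a' y) • b' + (polarForm Q b' y) • a'), ?_, ?_, ?_, ?_, ?_, ?_⟩ <;>
    simp only [pf_add_right Q hQ0 hbil, pf_smul_right Q hQ0 hbil]
  · rw [hy1, heb, hea, heb', hea']; ring
  · rw [hy2, hub, hua, hub', hua']; ring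
  · rw [hab, pf_self Q hQ0 hbil, hab2, haa', mul_one, mul_zero, mul_zero, mul_zero]
    rw [add_zero, add_zero, add_zero]
    exact zmod2_add_self _
  · rw [pf_self Q hQ0 hbil, polarForm_comm Q b a, hab, hba', hbb',
      mul_zero, mul_one, mul_zero, mul_zero]
    rw [zero_add, add_zero, add_zero]
    exact zmod2_add_self _
  · rw [hab', pf_self Q hQ0 hbil, polarForm_comm Q a' a, polarForm_comm Q a' b, haa', hba',
      mul_one, mul_zero, mul_zero, mul_zero]
    exact zmod2_add_self _
  · rw [pf_self Q hQ0 hbil, polarForm_comm Q b' a, polarForm_comm Q b' b,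
      polarForm_comm Q b' a', hab', hab2, hbb',
      mul_zero, mul_one, mul_zero, mul_zero]
    simp only [add_zero, zero_add]
    exact zmod2_add_self _


omit hQ0 hbil hnondeg in
lemma pick (S : Finset V8) (u : V8) (hcard : 3 ≤ S.card) : ∃ e ∈ S, e ≠ 0 ∧ e ≠ u := by
  have h2 : ({0, u} : Finset V8).card ≤ 2 :=
    (Finset.card_insert_le _ _).trans (by simp)
  have h3 := Finset.le_card_sdiff ({0, u} : Finset V8) S
  have hne : (S \ {0, u}).Nonempty := Finset.card_pos.mp (by omega)
  obtain ⟨e, he⟩ := hne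
  rw [Finset.mem_sdiff] at he
  refine ⟨e, he.1, ?_, ?_⟩ <;> intro h <;> apply he.2 <;> simp [h]


omit hQ0 hbil hnondeg in
lemma zmod2_cancel : ∀ a b : ZMod 2, a + b = 0 → a = b := by decide

omit hQ0 hbil hnondeg in
lemma v8_cancel : ∀ a b : V8, a + b = 0 → a = b := fun a b hab => by
  have := congrArg (· + b) hab
  simpa [add_assoc, v8_add_self] using this

lemma spanning (u : V8) (hu0 : u ≠ 0) (w : Fin 6 → V8)
    (hwu : ∀ i, polarForm Q u (w i) = 0)
    (hgram : ∀ i j, polarForm Q (w i) (w j) = gram i j) :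
    ∀ x, polarForm Q u x = 0 →
      ∃ p : ZMod 2 × (Fin 6 → ZMod 2), p.1 • u + ∑ i, p.2 i • w i = x := by
  classical
  have pfar := pf_add_right Q hQ0 hbil
  have pfsr := pf_smul_right Q hQ0 hbil
  have pfs := pf_self Q hQ0 hbil
  set F : ZMod 2 × (Fin 6 → ZMod 2) → V8 :=
    fun p => p.1 • u + ∑ i, p.2 i • w i with hF
  -- injectivity
  have hinj : Function.Injective F := by
    intro p q hpq
    have h0 : F p + F q = 0 := by rw [hpq]; exact v8_add_self _
    have hsum : (p.1 + q.1) • u + ∑ i, (p.2 i + q.2 i) • w i = 0 := by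
      rw [← h0]
      simp only [hF, add_smul, Finset.sum_add_distrib]
      abel
    have hmoved : ∑ i, (p.2 i + q.2 i) • w i = (p.1 + q.1) • u := by
      have h := hsum
      rw [add_comm] at h
      exact v8_cancel _ _ h
    have hd : (fun i => p.2 i + q.2 i) = 0 := by
      apply gram_nondeg
      intro j
      have h1 : polarForm Q (∑ i, (p.2 i + q.2 i) • w i) (w j)
          = ∑ i, (p.2 i + q.2 i) * gram i j := by
        rw [pf_sum_left Q hQ0 hbil]
        exact Finset.sum_congr rfl fun i _ => by rw [hgram]
      rw [hmoved] at h1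
      rw [← h1, pf_smul_left Q hQ0 hbil, hwu, mul_zero]
    have hp2 : p.2 = q.2 := by
      funext i
      have h := congrFun hd i
      rw [Pi.zero_apply] at h
      exact zmod2_cancel _ _ h
    have hp1 : p.1 = q.1 := by
      have h2 : p.1 • u = q.1 • u := by
        have := hpq
        simp only [hF, hp2] at this
        exact add_right_cancel this
      by_contra hne
      have hall : ∀ a b : ZMod 2, a ≠ b → a + b = 1 := by decide
      have h3 : (p.1 + q.1) • u = 0 := by
        rw [add_smul, h2]
        exact v8_add_self _
      rw [hall _ _ hne, one_smul] at h3
      exact hu0 h3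
    exact Prod.ext hp1 hp2
  -- image is contained in the perp of u
  set S1 : Finset V8 := Finset.univ.filter (fun x => polarForm Q u x = 0) with hS1
  have himg : Finset.image F Finset.univ ⊆ S1 := by
    intro x hx
    obtain ⟨p, _, hp⟩ := Finset.mem_image.mp hx
    rw [hS1, Finset.mem_filter]
    refine ⟨Finset.mem_univ _, ?_⟩
    rw [← hp]
    simp only [hF]
    rw [pfar, pfsr, pfs, mul_zero, zero_add, polarForm_comm,
      pf_sum_left Q hQ0 hbil]
    apply Finset.sum_eq_zero
    intro i _
    rw [polarForm_comm, hwu, mul_zero]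
  -- cardinalities
  have hy0 : ∃ y, polarForm Q u y = 1 := by
    by_contra h
    push_neg at h
    exact hu0 (hnondeg u (fun y => by
      have h2 : ∀ b : ZMod 2, b ≠ 1 → b = 0 := by decide
      exact h2 _ (h y)))
  obtain ⟨y0, hy0⟩ := hy0
  have hunivcard : (Finset.univ : Finset V8).card = 256 := by
    rw [Finset.card_univ]; simp [Fintype.card_fun]
  have hcard1 : S1.card = 128 := by
    have := halve Q hQ0 hbil Finset.univ u y0 (Finset.mem_univ _) hy0
      (fun x _ => Finset.mem_univ _)
    rw [← hS1, hunivcard] at this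
    omega
  have hcardimg : (Finset.image F Finset.univ).card = 128 := by
    rw [Finset.card_image_of_injective _ hinj, Finset.card_univ]
    simp [Fintype.card_fun]
  have heq : Finset.image F Finset.univ = S1 :=
    Finset.eq_of_subset_of_card_le himg (by omega)
  intro x hx
  have : x ∈ S1 := by rw [hS1, Finset.mem_filter]; exact ⟨Finset.mem_univ _, hx⟩
  rw [← heq] at this
  obtain ⟨p, _, hp⟩ := Finset.mem_image.mp this
  exact ⟨p, hp⟩

set_option maxHeartbeats 1000000 in
lemma exists_sympl_basis (u : V8) (hu0 : u ≠ 0) :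
    ∃ w : Fin 6 → V8,
      (∀ i, polarForm Q u (w i) = 0) ∧
      (∀ i j, polarForm Q (w i) (w j) = gram i j) ∧
      (∀ x, polarForm Q u x = 0 →
        ∃ p : ZMod 2 × (Fin 6 → ZMod 2), p.1 • u + ∑ i, p.2 i • w i = x) := by
  classical
  have pfar := pf_add_right Q hQ0 hbil
  have pfsl := pf_smul_left Q hQ0 hbil
  have pfs := pf_self Q hQ0 hbil
  have pf0l := pf_zero_left Q hQ0 hbil
  have pf0r := pf_zero_right Q hQ0 hbil
  -- S1
  set S1 : Finset V8 := Finset.univ.filter (fun x => polarForm Q u x = 0) with hS1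
  have hmem1 : ∀ x, x ∈ S1 ↔ polarForm Q u x = 0 := by intro x; simp [hS1]
  have hunivcard : (Finset.univ : Finset V8).card = 256 := by
    rw [Finset.card_univ]; simp [Fintype.card_fun]
  have hy0 : ∃ y, polarForm Q u y = 1 := by
    by_contra h
    push_neg at h
    exact hu0 (hnondeg u (fun y => by
      have h2 : ∀ b : ZMod 2, b ≠ 1 → b = 0 := by decide
      exact h2 _ (h y)))
  obtain ⟨y0, hy0⟩ := hy0
  have hcard1 : S1.card = 128 := by
    have := halve Q hQ0 hbil Finset.univ u y0 (Finset.mem_univ _) hy0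
      (fun x _ => Finset.mem_univ _)
    rw [← hS1, hunivcard] at this
    omega
  have h0S1 : (0 : V8) ∈ S1 := (hmem1 0).mpr (pf0r u)
  have huS1 : u ∈ S1 := (hmem1 u).mpr (pfs u)
  -- e1
  obtain ⟨e1, he1S, he10, he1u⟩ := pick S1 u (by omega)
  have hue1 : polarForm Q u e1 = 0 := (hmem1 e1).mp he1S
  -- f1
  obtain ⟨f1, he1f1, huf1⟩ := exists_y Q hQ0 hbil hnondeg u e1 he10 he1u
  -- S3
  set S2 : Finset V8 := S1.filter (fun x => polarForm Q e1 x = 0) with hS2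
  set S3 : Finset V8 := S2.filter (fun x => polarForm Q f1 x = 0) with hS3
  have hmem3 : ∀ x, x ∈ S3 ↔ (polarForm Q u x = 0 ∧ polarForm Q e1 x = 0 ∧
      polarForm Q f1 x = 0) := by
    intro x
    simp only [hS3, hS2, hS1, Finset.mem_filter, Finset.mem_univ, true_and, and_assoc]
  have hcard2 : S2.card = 64 := by
    have := halve Q hQ0 hbil S1 e1 f1 ((hmem1 f1).mpr huf1) he1f1
      (fun x hx => (hmem1 _).mpr (by rw [pfar, (hmem1 x).mp hx, huf1, add_zero]))
    rw [← hS2, hcard1] at this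
    omega
  have hcard3 : S3.card = 32 := by
    have := halve Q hQ0 hbil S2 f1 e1
      (by simp only [hS2, Finset.mem_filter]; exact ⟨he1S, pfs e1⟩)
      (by rw [polarForm_comm]; exact he1f1)
      (fun x hx => by
        simp only [hS2, Finset.mem_filter] at hx ⊢
        refine ⟨(hmem1 _).mpr (by rw [pfar, (hmem1 x).mp hx.1, hue1, add_zero]), ?_⟩
        rw [pfar, hx.2, pfs, add_zero])
    rw [← hS3, hcard2] at this
    omega
  have h0S3 : (0 : V8) ∈ S3 := (hmem3 0).mpr ⟨pf0r u, pf0r e1, pf0r f1⟩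
  have huS3 : u ∈ S3 := (hmem3 u).mpr ⟨pfs u, by rw [polarForm_comm]; exact hue1,
    by rw [polarForm_comm]; exact huf1⟩
  -- e2
  obtain ⟨e2, he2S, he20, he2u⟩ := pick S3 u (by omega)
  obtain ⟨hue2, he1e2, hf1e2⟩ := (hmem3 e2).mp he2S
  -- f2
  obtain ⟨f2, he2f2, huf2, he1f2', hf1f2'⟩ :=
    exists_partner1 Q hQ0 hbil hnondeg u e2 e1 f1 he1f1 hue1 huf1
      (by rw [polarForm_comm]; exact he1e2) (by rw [polarForm_comm]; exact hf1e2)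
      he20 he2u
  have he1f2 : polarForm Q e1 f2 = 0 := he1f2'
  have hf1f2 : polarForm Q f1 f2 = 0 := hf1f2'
  -- S5
  set S4 : Finset V8 := S3.filter (fun x => polarForm Q e2 x = 0) with hS4
  set S5 : Finset V8 := S4.filter (fun x => polarForm Q f2 x = 0) with hS5
  have hmem5 : ∀ x, x ∈ S5 ↔ (polarForm Q u x = 0 ∧ polarForm Q e1 x = 0 ∧
      polarForm Q f1 x = 0 ∧ polarForm Q e2 x = 0 ∧ polarForm Q f2 x = 0) := by
    intro x
    simp only [hS5, hS4, hS3, hS2, hS1, Finset.mem_filter, Finset.mem_univ, true_and, and_assoc]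
  have hcard4 : S4.card = 16 := by
    have := halve Q hQ0 hbil S3 e2 f2 ((hmem3 f2).mpr ⟨huf2, he1f2, hf1f2⟩) he2f2
      (fun x hx => by
        obtain ⟨h1, h2, h3⟩ := (hmem3 x).mp hx
        exact (hmem3 _).mpr ⟨by rw [pfar, h1, huf2, add_zero],
          by rw [pfar, h2, he1f2, add_zero], by rw [pfar, h3, hf1f2, add_zero]⟩)
    rw [← hS4, hcard3] at this
    omega
  have hcard5 : S5.card = 8 := by
    have := halve Q hQ0 hbil S4 f2 e2
      (by simp only [hS4, Finset.mem_filter]; exact ⟨he2S, pfs e2⟩)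
      (by rw [polarForm_comm]; exact he2f2)
      (fun x hx => by
        simp only [hS4, Finset.mem_filter] at hx ⊢
        obtain ⟨hx3, hx4⟩ := hx
        obtain ⟨h1, h2, h3⟩ := (hmem3 x).mp hx3
        refine ⟨(hmem3 _).mpr ⟨by rw [pfar, h1, hue2, add_zero],
          by rw [pfar, h2, he1e2, add_zero], by rw [pfar, h3, hf1e2, add_zero]⟩, ?_⟩
        rw [pfar, hx4, pfs, add_zero])
    rw [← hS5, hcard4] at this
    omega
  have h0S5 : (0 : V8) ∈ S5 := (hmem5 0).mpr ⟨pf0r u, pf0r e1, pf0r f1, pf0r e2, pf0r f2⟩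
  have huS5 : u ∈ S5 := (hmem5 u).mpr ⟨pfs u, by rw [polarForm_comm]; exact hue1,
    by rw [polarForm_comm]; exact huf1, by rw [polarForm_comm]; exact hue2,
    by rw [polarForm_comm]; exact huf2⟩
  -- e3
  obtain ⟨e3, he3S, he30, he3u⟩ := pick S5 u (by omega)
  obtain ⟨hue3, he1e3, hf1e3, he2e3, hf2e3⟩ := (hmem5 e3).mp he3S
  -- f3
  obtain ⟨f3, he3f3, huf3, he1f3, hf1f3, he2f3, hf2f3⟩ :=
    exists_partner2 Q hQ0 hbil hnondeg u e3 e1 f1 e2 f2 he1f1 hue1 huf1 he2f2 hue2 huf2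
      he1e2 he1f2 hf1e2 hf1f2
      (by rw [polarForm_comm]; exact he1e3) (by rw [polarForm_comm]; exact hf1e3)
      (by rw [polarForm_comm]; exact he2e3) (by rw [polarForm_comm]; exact hf2e3)
      he30 he3u
  -- the basis
  refine ⟨six e1 f1 e2 f2 e3 f3, ?_, ?_, ?_⟩
  · intro i
    fin_cases i <;> simp only [six, Fin.mk_zero, Fin.mk_one] <;> assumption
  · exact gram_of_facts Q e1 f1 e2 f2 e3 f3 pfs he1f1 he2f2 he3f3 he1e2 he1f2 hf1e2 hf1f2
      he1e3 he1f3 hf1e3 hf1f3 he2e3 he2f3 hf2e3 hf2f3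
  · exact spanning Q hQ0 hbil hnondeg u hu0 _
      (fun i => by fin_cases i <;> simp only [six, Fin.mk_zero, Fin.mk_one] <;> assumption)
      (gram_of_facts Q e1 f1 e2 f2 e3 f3 pfs he1f1 he2f2 he3f3 he1e2 he1f2 hf1e2 hf1f2
        he1e3 he1f3 hf1e3 hf1f3 he2e3 he2f3 hf2e3 hf2f3)

end

/-- For any quadratic form `Q` on `GF(2)^8` with nondegenerate
polar form, the perp-graph on the nonsingular vectors of `Q` is locally the
`Sp_6(2)` polar graph. -/
theorem stmt_7 (Q : (Fin 8 → ZMod 2) → ZMod 2)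
    (hQ0 : Q 0 = 0)
    (hbil : ∀ x y z : Fin 8 → ZMod 2,
      polarForm Q (x + y) z = polarForm Q x z + polarForm Q y z)
    (hnondeg : ∀ x : Fin 8 → ZMod 2,
      (∀ y : Fin 8 → ZMod 2, polarForm Q x y = 0) → x = 0) :
    ∀ u : {v : Fin 8 → ZMod 2 // Q v = 1},
      Nonempty
        (((nonsingularGraph Q).induce ((nonsingularGraph Q).neighborSet u)) ≃g
          sp6PolarGraph) := by

  intro u
  have pfar := pf_add_right Q hQ0 hbil
  have pfsl := pf_smul_left Q hQ0 hbil
  have pfsr := pf_smul_right Q hQ0 hbil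
  have pfs := pf_self Q hQ0 hbil
  have pf0l := pf_zero_left Q hQ0 hbil
  have hQu : Q u.1 = 1 := u.2
  have hu0 : u.1 ≠ 0 := by
    intro h
    rw [h, hQ0] at hQu
    exact absurd hQu (by decide)
  obtain ⟨w, hwu, hgram, hspan⟩ := exists_sympl_basis Q hQ0 hbil hnondeg u.1 hu0
  set L : (Fin 6 → ZMod 2) → V8 := fun c => ∑ i, c i • w i with hL
  have hLadd : ∀ c d, L (c + d) = L c + L d := by
    intro c d
    simp only [hL, Pi.add_apply, add_smul, Finset.sum_add_distrib]
  have hL0 : L 0 = 0 := by simp [hL]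
  have hBLw : ∀ c j, polarForm Q (L c) (w j) = ∑ i, c i * gram i j := by
    intro c j
    rw [hL, pf_sum_left Q hQ0 hbil]
    exact Finset.sum_congr rfl fun i _ => by rw [hgram]
  have hBLu : ∀ c, polarForm Q (L c) u.1 = 0 := by
    intro c
    rw [hL, pf_sum_left Q hQ0 hbil]
    apply Finset.sum_eq_zero
    intro i _
    rw [polarForm_comm, hwu, mul_zero]
  have hBLL : ∀ c d, polarForm Q (L c) (L d) = sp6Form c d := by
    intro c d
    rw [hL, pf_sum_left Q hQ0 hbil, ← gram_sp6]
    apply Finset.sum_congr rfl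
    intro i _
    congr 1
    rw [polarForm_comm, ← hL, hBLw]
  have hmod : ∀ c, (L c = 0 ∨ L c = u.1) → c = 0 := by
    intro c hc
    apply gram_nondeg
    intro j
    rw [← hBLw]
    rcases hc with h | h <;> rw [h]
    · exact pf0l _
    · exact hwu j
  -- the vertex map
  set vec : (Fin 6 → ZMod 2) → V8 := fun c => L c + (1 + Q (L c)) • u.1 with hvec
  have hz2 : ∀ a : ZMod 2, a = 0 ∨ a = 1 := by decide
  have hQadd : ∀ x : V8, Q (x + u.1) = polarForm Q x u.1 + Q x + Q u.1 := by
    intro x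
    have h : polarForm Q x u.1 = Q (x + u.1) + Q x + Q u.1 := rfl
    have h2 : ∀ a b c d : ZMod 2, d = a + b + c → a = d + b + c := by decide
    exact h2 _ _ _ _ h
  have h110 : (1 + 1 : ZMod 2) = 0 := by decide
  have hQvec : ∀ c, Q (vec c) = 1 := by
    intro c
    rcases hz2 (Q (L c)) with h | h <;> simp only [hvec]
    · rw [h, add_zero, one_smul, hQadd, hBLu, h, hQu, zero_add, zero_add]
    · rw [h, h110, zero_smul, add_zero]
      exact h
  have hvec_or : ∀ c, vec c = L c ∨ vec c = L c + u.1 := by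
    intro c
    rcases hz2 (Q (L c)) with h | h <;> simp only [hvec]
    · right; rw [h, add_zero, one_smul]
    · left; rw [h, h110, zero_smul, add_zero]
  have hvecu : ∀ c, (vec c = u.1 ∨ vec c = 0) → c = 0 := by
    intro c h
    rcases hvec_or c with h2 | h2 <;> rcases h with h | h <;> rw [h] at h2
    · exact hmod c (Or.inr h2.symm)
    · exact hmod c (Or.inl h2.symm)
    · -- u.1 = L c + u.1 : cancel
      apply hmod c
      left
      have h3 := congrArg (· + u.1) h2
      simp only [add_assoc, v8_add_self, add_zero] at h3
      exact h3.symm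
    · -- 0 = L c + u.1 : L c = u.1
      apply hmod c
      right
      have h3 := congrArg (· + u.1) h2
      simp only [add_assoc, v8_add_self, add_zero, zero_add] at h3
      exact h3.symm
  have hBuL : ∀ c, polarForm Q u.1 (L c) = 0 := by
    intro c
    rw [polarForm_comm]
    exact hBLu c
  have hBuvec : ∀ c, polarForm Q u.1 (vec c) = 0 := by
    intro c
    rcases hvec_or c with h | h <;> rw [h]
    · exact hBuL c
    · rw [pfar, hBuL, pfs, add_zero]
  have hBvecvec : ∀ c d, polarForm Q (vec c) (vec d) = sp6Form c d := by
    intro c d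
    have hBLvec : ∀ c d, polarForm Q (L c) (vec d) = sp6Form c d := by
      intro c d
      rcases hvec_or d with h | h <;> rw [h]
      · exact hBLL c d
      · rw [pfar, hBLu, add_zero]
        exact hBLL c d
    rcases hvec_or c with h | h <;> rw [h]
    · exact hBLvec c d
    · rw [polarForm_comm, pfar, polarForm_comm Q (vec d) (L c), hBLvec,
        polarForm_comm Q (vec d) u.1, hBuvec, add_zero, sp6Form_comm]
  have hvecinj : ∀ c d, vec c = vec d → c = d := by
    intro c d h
    have h0 : vec c + vec d = 0 := by rw [h]; exact v8_add_self _
    have h1 : L (c + d) + ((1 + Q (L c)) + (1 + Q (L d))) • u.1 = 0 := by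
      rw [hLadd, add_smul, ← h0]
      simp only [hvec]
      abel
    have h2 := v8_cancel _ _ h1
    have hcd : c + d = 0 := by
      apply hmod
      rcases hz2 ((1 + Q (L c)) + (1 + Q (L d))) with hq | hq <;> rw [hq] at h2
      · left; rw [h2, zero_smul]
      · right; rw [h2, one_smul]
    funext i
    exact zmod2_cancel _ _ (congrFun hcd i)
  -- surjectivity data
  have hsurj : ∀ v : {v : Fin 8 → ZMod 2 // Q v = 1},
      (nonsingularGraph Q).Adj u v → ∃ c, c ≠ 0 ∧ vec c = v.1 := by
    intro v hadj
    obtain ⟨hne, hB⟩ := hadj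
    obtain ⟨p, hp⟩ := hspan v.1 hB
    refine ⟨p.2, ?_, ?_⟩
    · intro hc0
      rw [hc0] at hp
      have hL0' : ∑ i, (0 : Fin 6 → ZMod 2) i • w i = 0 := hL0
      rw [hL0', add_zero] at hp
      rcases hz2 p.1 with hq | hq <;> rw [hq] at hp
      · rw [zero_smul] at hp
        have := v.2
        rw [← hp, hQ0] at this
        exact absurd this (by decide)
      · rw [one_smul] at hp
        exact hne (Subtype.ext hp)
    · -- vec p.2 = v.1
      have h3 : ∑ i, p.2 i • w i = p.1 • u.1 + v.1 := by
        have h4 := congrArg (fun z => p.1 • u.1 + z) hp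
        simp only [← add_assoc, ← add_smul, zmod2_add_self, zero_smul, zero_add] at h4
        exact h4
      have hLv : L p.2 = v.1 + p.1 • u.1 := h3.trans (add_comm _ _)
      rcases hz2 p.1 with hq | hq <;> rw [hq] at hLv
      · rw [zero_smul, add_zero] at hLv
        have hQL : Q (L p.2) = 1 := by rw [hLv]; exact v.2
        simp only [hvec]
        rw [hQL, h110, zero_smul, add_zero, hLv]
      · rw [one_smul] at hLv
        have hQL : Q (L p.2) = 0 := by
          rw [hLv, hQadd, polarForm_comm Q v.1 u.1, hB, v.2, hQu, zero_add]
          exact h110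
        simp only [hvec]
        rw [hQL, add_zero, one_smul, hLv, add_assoc, v8_add_self, add_zero]
  -- the isomorphism
  have hΦmem : ∀ c : {c : Fin 6 → ZMod 2 // c ≠ 0},
      (⟨vec c.1, hQvec c.1⟩ : {v : Fin 8 → ZMod 2 // Q v = 1}) ∈
        (nonsingularGraph Q).neighborSet u :=
    fun c => ⟨fun h => c.2 (hvecu c.1 (Or.inl (congrArg Subtype.val h).symm)),
      hBuvec c.1⟩
  let Φ : {c : Fin 6 → ZMod 2 // c ≠ 0} → ((nonsingularGraph Q).neighborSet u) :=
    fun c => ⟨⟨vec c.1, hQvec c.1⟩, hΦmem c⟩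
  have hΦinj : Function.Injective Φ := by
    intro a b h
    have h2 : vec a.1 = vec b.1 := congrArg (fun z => z.1.1) h
    exact Subtype.ext (hvecinj _ _ h2)
  have hΦsurj : Function.Surjective Φ := by
    rintro ⟨⟨v, hQv⟩, hvmem⟩
    have hadj : (nonsingularGraph Q).Adj u ⟨v, hQv⟩ := hvmem
    obtain ⟨c, hc0, hcv⟩ := hsurj ⟨v, hQv⟩ hadj
    exact ⟨⟨c, hc0⟩, Subtype.ext (Subtype.ext hcv)⟩
  refine ⟨SimpleGraph.Iso.symm ⟨Equiv.ofBijective Φ ⟨hΦinj, hΦsurj⟩, ?_⟩⟩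
  intro a b
  show ((nonsingularGraph Q).induce ((nonsingularGraph Q).neighborSet u)).Adj
    (Φ a) (Φ b) ↔ sp6PolarGraph.Adj a b
  have hLHS : ((nonsingularGraph Q).induce ((nonsingularGraph Q).neighborSet u)).Adj
      (Φ a) (Φ b) ↔ (nonsingularGraph Q).Adj ⟨vec a.1, hQvec a.1⟩ ⟨vec b.1, hQvec b.1⟩ :=
    Iff.rfl
  rw [hLHS]
  constructor
  · rintro ⟨hne, hB⟩
    refine ⟨?_, ?_⟩
    · intro hab
      apply hne
      rw [hab]
    · rw [← hBvecvec a.1 b.1]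
      exact hB
  · rintro ⟨hne, hB⟩
    refine ⟨?_, ?_⟩
    · intro hab
      have h2 : vec a.1 = vec b.1 := congrArg Subtype.val hab
      exact hne (Subtype.ext (hvecinj _ _ h2))
    · rw [hBvecvec a.1 b.1]
      exact hB
end
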